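/- Let ω > 0, τ ∈ ℝ, a, ω real with a² + ω² > 0, and b, c real. Define u₁ = (bω·sin(ωτ) − a(c + b·cos(ωτ)))/(ω² + a²) and u₂ = (ab·sin(ωτ) + ω(c + b·cos(ωτ)))/(ω² + a²). If 2bc·cos(ωτ) + b² + c² = ω² + a², then u₁² + u₂² = 1, and hence there exists σ̄ ∈ [0, 2π/ω) with cos(ωσ̄) = u₁ and sin(ωσ̄) = u₂. -/

import Mathlib

theorem stmt_18 (a b c τ ω : ℝ) (hω : 0 < ω) (h0 : 0 < a ^ 2 + ω ^ 2)
    (h : 2 * b * c * Real.cos (ω * τ) + b ^ 2 + c ^ 2 = ω ^ 2 + a ^ 2) :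
    let u₁ : ℝ := (b * ω * Real.sin (ω * τ) - a * (c + b * Real.cos (ω * τ))) / (ω ^ 2 + a ^ 2)
    let u₂ : ℝ := (a * b * Real.sin (ω * τ) + ω * (c + b * Real.cos (ω * τ))) / (ω ^ 2 + a ^ 2)
    u₁ ^ 2 + u₂ ^ 2 = 1 ∧
    ∃ σ ∈ Set.Ico (0 : ℝ) (2 * Real.pi / ω), Real.cos (ω * σ) = u₁ ∧ Real.sin (ω * σ) = u₂ := by
  intro u₁ u₂
  have hne : (ω ^ 2 + a ^ 2) ≠ 0 := by nlinarith
  have hpy : Real.sin (ω * τ) ^ 2 + Real.cos (ω * τ) ^ 2 = 1 := Real.sin_sq_add_cos_sq _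
  have hone : u₁ ^ 2 + u₂ ^ 2 = 1 := by
    show ((b * ω * Real.sin (ω * τ) - a * (c + b * Real.cos (ω * τ))) / (ω ^ 2 + a ^ 2)) ^ 2 +
      ((a * b * Real.sin (ω * τ) + ω * (c + b * Real.cos (ω * τ))) / (ω ^ 2 + a ^ 2)) ^ 2 = 1
    field_simp
    linear_combination (ω ^ 2 + a ^ 2) * b ^ 2 * hpy + (ω ^ 2 + a ^ 2) * h
  refine ⟨hone, ?_⟩
  -- find θ with cos θ = u₁, sin θ = u₂
  obtain ⟨θ, hθ1, hθ2, hc, hs⟩ : ∃ θ, -Real.pi < θ ∧ θ ≤ Real.pi ∧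
      Real.cos θ = u₁ ∧ Real.sin θ = u₂ := by
    set z : ℂ := ⟨u₁, u₂⟩ with hz
    have habs : ‖z‖ = 1 := by
      have : ‖z‖ = Real.sqrt (u₁ ^ 2 + u₂ ^ 2) := by
        rw [Complex.norm_def, Complex.normSq_mk]; ring_nf
      rw [this, hone, Real.sqrt_one]
    have hz0 : z ≠ 0 := by
      intro h0'; rw [h0', norm_zero] at habs; norm_num at habs
    refine ⟨Complex.arg z, Complex.neg_pi_lt_arg z, Complex.arg_le_pi z, ?_, ?_⟩
    · have := Complex.cos_arg hz0
      rw [habs] at this; simpa using this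
    · have := Complex.sin_arg z
      rw [habs] at this; simpa using this
  have hpi : (0:ℝ) < Real.pi := Real.pi_pos
  set θ' : ℝ := if θ < 0 then θ + 2 * Real.pi else θ with hθ'
  have hc' : Real.cos θ' = u₁ := by
    rw [hθ']; split_ifs with hlt
    · rw [Real.cos_add_two_pi, hc]
    · exact hc
  have hs' : Real.sin θ' = u₂ := by
    rw [hθ']; split_ifs with hlt
    · rw [Real.sin_add_two_pi, hs]
    · exact hs
  have hb1 : 0 ≤ θ' := by
    rw [hθ']; split_ifs with hlt <;> [linarith; linarith]
  have hb2 : θ' < 2 * Real.pi := by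
    rw [hθ']; split_ifs with hlt <;> [linarith; linarith]
  refine ⟨θ' / ω, ⟨by positivity, ?_⟩, ?_, ?_⟩
  · rw [div_lt_div_iff₀ hω hω] at *
    · nlinarith
  · rw [mul_div_cancel₀ _ hω.ne']; exact hc'
  · rw [mul_div_cancel₀ _ hω.ne']; exact hs'
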